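/- arXiv:1407.2339 — 2 statements merged into one kernel-verified Lean document; each statement's English description precedes it below -/
import Mathlib

section
/- Let Ω ⊂ ℂⁿ be bounded with 0 ∈ Ω and |z| < e^{-1} on Ω. For ε > 0 set φ(z) = log(|z|² + ε²), η = -φ + log(-φ), and λ = (1-φ)². Then on Ω one has the (1,1)-form inequality -i∂∂̄η - λ^{-1} i∂η ∧ ∂̄η ≥ i∂∂̄φ. -/
open Metric

variable {n : ℕ}

/-- The Wirtinger derivative `∂g/∂z̄ⱼ`. -/
noncomputable def dbar (j : Fin n) (g : (Fin n → ℂ) → ℂ) (z : Fin n → ℂ) : ℂ :=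
  (1 / 2) * (fderiv ℝ g z (Pi.single j 1) + Complex.I * fderiv ℝ g z (Pi.single j Complex.I))

/-- The Wirtinger derivative `∂g/∂zⱼ`. -/
noncomputable def dz (j : Fin n) (g : (Fin n → ℂ) → ℂ) (z : Fin n → ℂ) : ℂ :=
  (1 / 2) * (fderiv ℝ g z (Pi.single j 1) - Complex.I * fderiv ℝ g z (Pi.single j Complex.I))

/-- The complex Hessian coefficient `∂²g/∂zⱼ∂z̄ₖ` of a real-valued function. -/
noncomputable def hess (j k : Fin n) (F : (Fin n → ℂ) → ℝ) (z : Fin n → ℂ) : ℂ :=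
  dz j (fun w => dbar k (fun y => ((F y : ℝ) : ℂ)) w) z

/-- `|z|² = ∑ⱼ |zⱼ|²`. -/
noncomputable def normSq (z : Fin n → ℂ) : ℝ := ∑ j, ‖z j‖ ^ 2

noncomputable def LS (z : Fin n → ℂ) : (Fin n → ℂ) →L[ℝ] ℝ :=
  ∑ j, (Complex.reCLM.comp (ContinuousLinearMap.mul ℝ ℂ (2 * (starRingEnd ℂ) (z j)))).comp
    ((ContinuousLinearMap.proj j : (Fin n → ℂ) →L[ℂ] ℂ).restrictScalars ℝ)

lemma LS_apply (z v : Fin n → ℂ) : LS z v = ∑ j, (2 * (starRingEnd ℂ) (z j) * v j).re := by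
  simp [LS]

lemma LS_single_one (z : Fin n → ℂ) (j : Fin n) : LS z (Pi.single j 1) = 2 * (z j).re := by
  rw [LS_apply, Finset.sum_eq_single j]
  · simp
  · intro b _ hb; simp [Pi.single_apply, hb]
  · simp

lemma LS_single_I (z : Fin n → ℂ) (j : Fin n) :
    LS z (Pi.single j Complex.I) = 2 * (z j).im := by
  rw [LS_apply, Finset.sum_eq_single j]
  · simp [Complex.mul_re]
  · intro b _ hb; simp [Pi.single_apply, hb]
  · simp

lemma hasFDerivAt_cnormSq (x : ℂ) :
    HasFDerivAt Complex.normSq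
      (Complex.reCLM.comp (ContinuousLinearMap.mul ℝ ℂ (2 * (starRingEnd ℂ) x))) x := by
  have h : HasFDerivAt (fun y : ℂ => y.re * y.re + y.im * y.im)
      ((x.re • Complex.reCLM + x.re • Complex.reCLM) + (x.im • Complex.imCLM + x.im • Complex.imCLM)) x :=
    (Complex.reCLM.hasFDerivAt.mul Complex.reCLM.hasFDerivAt).add
      (Complex.imCLM.hasFDerivAt.mul Complex.imCLM.hasFDerivAt)
  have hfun : (Complex.normSq : ℂ → ℝ) = fun y => y.re * y.re + y.im * y.im :=
    funext fun y => Complex.normSq_apply y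
  rw [hfun]
  refine h.congr_fderiv ?_
  ext v
  simp [Complex.mul_re]
  ring

lemma hasFDerivAt_normSq (z : Fin n → ℂ) :
    HasFDerivAt (fun w : Fin n → ℂ => normSq w) (LS z) z := by
  have hfun : (fun w : Fin n → ℂ => normSq w) = fun w => ∑ j, Complex.normSq (w j) := by
    funext w; simp [_root_.normSq, Complex.sq_norm]
  rw [hfun, LS]
  refine HasFDerivAt.fun_sum fun j _ => ?_
  exact (hasFDerivAt_cnormSq (z j)).comp z
    (((ContinuousLinearMap.proj j : (Fin n → ℂ) →L[ℂ] ℂ).restrictScalars ℝ).hasFDerivAt)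

lemma hasFDerivAt_S (ε : ℝ) (z : Fin n → ℂ) :
    HasFDerivAt (fun w : Fin n → ℂ => normSq w + ε ^ 2) (LS z) z :=
  (hasFDerivAt_normSq z).add_const _

/-- If a real function has derivative `a • LS z` at `z`, its complexification has
dbar k equal to `a * z k`. -/
lemma dbar_of_real {F : (Fin n → ℂ) → ℝ} {a : ℝ} {z : Fin n → ℂ}
    (h : HasFDerivAt F (a • LS z) z) (k : Fin n) :
    dbar k (fun y => ((F y : ℝ) : ℂ)) z = (a : ℂ) * z k := by
  have hc : HasFDerivAt (fun y => ((F y : ℝ) : ℂ))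
      (Complex.ofRealCLM.comp (a • LS z)) z := Complex.ofRealCLM.hasFDerivAt.comp z h
  rw [dbar, hc.fderiv]
  simp [LS_single_one, LS_single_I]
  simp [Complex.ext_iff]
  constructor <;> ring

lemma dz_of_real {F : (Fin n → ℂ) → ℝ} {a : ℝ} {z : Fin n → ℂ}
    (h : HasFDerivAt F (a • LS z) z) (j : Fin n) :
    dz j (fun y => ((F y : ℝ) : ℂ)) z = (a : ℂ) * (starRingEnd ℂ) (z j) := by
  have hc : HasFDerivAt (fun y => ((F y : ℝ) : ℂ))
      (Complex.ofRealCLM.comp (a • LS z)) z := Complex.ofRealCLM.hasFDerivAt.comp z h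
  rw [dz, hc.fderiv]
  simp [LS_single_one, LS_single_I, Complex.ext_iff]
  constructor <;> ring

lemma normSq_nonneg' (z : Fin n → ℂ) : 0 ≤ normSq z :=
  Finset.sum_nonneg fun j _ => sq_nonneg _

lemma S_pos {ε : ℝ} (hε : 0 < ε) (z : Fin n → ℂ) : 0 < normSq z + ε ^ 2 :=
  add_pos_of_nonneg_of_pos (normSq_nonneg' z) (by positivity)

lemma hasFDerivAt_phi {ε : ℝ} (hε : 0 < ε) (z : Fin n → ℂ) :
    HasFDerivAt (fun w : Fin n → ℂ => Real.log (normSq w + ε ^ 2))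
      (((normSq z + ε ^ 2)⁻¹) • LS z) z :=
  ((Real.hasDerivAt_log (S_pos hε z).ne').comp_hasFDerivAt z (hasFDerivAt_S ε z) :)

lemma hasFDerivAt_Sinv {ε : ℝ} (hε : 0 < ε) (z : Fin n → ℂ) :
    HasFDerivAt (fun w : Fin n → ℂ => (normSq w + ε ^ 2)⁻¹)
      ((-(((normSq z + ε ^ 2)) ^ 2)⁻¹) • LS z) z :=
  (hasDerivAt_inv (S_pos hε z).ne').comp_hasFDerivAt z (hasFDerivAt_S ε z)

lemma single_I (j k : Fin n) :
    (Pi.single j Complex.I : Fin n → ℂ) k = Complex.I * (Pi.single j 1 : Fin n → ℂ) k := by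
  rcases eq_or_ne k j with h | h <;> simp [Pi.single_apply, h]

lemma hess_phi {ε : ℝ} (hε : 0 < ε) (z : Fin n → ℂ) (j k : Fin n) :
    hess j k (fun w => Real.log (normSq w + ε ^ 2)) z =
      (Pi.single j 1 : Fin n → ℂ) k * (((normSq z + ε ^ 2 : ℝ)) : ℂ)⁻¹ -
        (starRingEnd ℂ) (z j) * z k * ((((normSq z + ε ^ 2 : ℝ)) : ℂ) ^ 2)⁻¹ := by
  set s : ℝ := normSq z + ε ^ 2 with hs
  have hfun : (fun w => dbar k (fun y => ((Real.log (_root_.normSq y + ε ^ 2) : ℝ) : ℂ)) w)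
      = fun w => ((((_root_.normSq w + ε ^ 2)⁻¹ : ℝ)) : ℂ) * w k :=
    funext fun w => dbar_of_real (hasFDerivAt_phi hε w) k
  rw [hess, hfun]
  -- derivative of w ↦ ((normSq w + ε²)⁻¹ : ℂ) * w k
  have hg : HasFDerivAt (fun w : Fin n → ℂ => ((((_root_.normSq w + ε ^ 2)⁻¹ : ℝ)) : ℂ))
      (Complex.ofRealCLM.comp ((-(s ^ 2)⁻¹) • LS z)) z :=
    Complex.ofRealCLM.hasFDerivAt.comp z (hasFDerivAt_Sinv hε z)
  have hp : HasFDerivAt (fun w : Fin n → ℂ => w k)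
      ((ContinuousLinearMap.proj k : (Fin n → ℂ) →L[ℂ] ℂ).restrictScalars ℝ) z :=
    ((ContinuousLinearMap.proj k : (Fin n → ℂ) →L[ℂ] ℂ).restrictScalars ℝ).hasFDerivAt
  have hG := hg.fun_mul hp
  rw [dz, hG.fderiv]
  have hsne : s ≠ 0 := (S_pos hε z).ne'
  simp only [ContinuousLinearMap.add_apply, ContinuousLinearMap.smul_apply,
    ContinuousLinearMap.comp_apply, ContinuousLinearMap.coe_restrictScalars',
    ContinuousLinearMap.proj_apply, Complex.ofRealCLM_apply, LS_single_one, LS_single_I,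
    smul_eq_mul, single_I]
  have hconj : (starRingEnd ℂ) (z j) =
      ((z j).re : ℂ) - ((z j).im : ℂ) * Complex.I := by
    simp [Complex.ext_iff]
  rw [hconj]
  push_cast
  field_simp
  ring_nf
  simp [Complex.I_sq]
  have hA : ((normSq z : ℂ) + (ε : ℂ) ^ 2) = ((s : ℝ) : ℂ) := by rw [hs]; push_cast; ring
  have hsc : ((s : ℝ) : ℂ) ≠ 0 := Complex.ofReal_ne_zero.mpr hsne
  rw [hA]
  field_simp
  ring

lemma hasFDerivAt_eta {ε : ℝ} (hε : 0 < ε) (z : Fin n → ℂ)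
    (hlt : normSq z + ε ^ 2 < 1) :
    HasFDerivAt
      (fun w : Fin n → ℂ =>
        -Real.log (normSq w + ε ^ 2) + Real.log (-Real.log (normSq w + ε ^ 2)))
      ((((-1 + (Real.log (normSq z + ε ^ 2))⁻¹) * (normSq z + ε ^ 2)⁻¹)) • LS z) z := by
  have hp : Real.log (normSq z + ε ^ 2) < 0 := Real.log_neg (S_pos hε z) hlt
  have h1 : HasFDerivAt (fun w : Fin n → ℂ => -Real.log (normSq w + ε ^ 2))
      (-(((normSq z + ε ^ 2)⁻¹) • LS z)) z := (hasFDerivAt_phi hε z).neg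
  have h2 : HasFDerivAt (fun w : Fin n → ℂ => Real.log (-Real.log (normSq w + ε ^ 2)))
      ((-Real.log (normSq z + ε ^ 2))⁻¹ • (-(((normSq z + ε ^ 2)⁻¹) • LS z))) z :=
    ((Real.hasDerivAt_log (neg_pos.mpr hp).ne').comp_hasFDerivAt z h1 :)
  have h := h1.add h2
  refine h.congr_fderiv ?_
  ext v
  simp only [ContinuousLinearMap.add_apply, ContinuousLinearMap.neg_apply,
    ContinuousLinearMap.smul_apply, smul_eq_mul]
  ring

lemma dz_eta {ε : ℝ} (hε : 0 < ε) (z : Fin n → ℂ) (hlt : normSq z + ε ^ 2 < 1) (j : Fin n) :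
    dz j (fun y =>
        (((-Real.log (normSq y + ε ^ 2) + Real.log (-Real.log (normSq y + ε ^ 2)) : ℝ)) : ℂ)) z
      = ((((-1 + (Real.log (normSq z + ε ^ 2))⁻¹) * (normSq z + ε ^ 2)⁻¹ : ℝ)) : ℂ) *
        (starRingEnd ℂ) (z j) :=
  dz_of_real (hasFDerivAt_eta hε z hlt) j

lemma continuous_S {ε : ℝ} : Continuous (fun w : Fin n → ℂ => normSq w + ε ^ 2) := by
  unfold normSq
  exact (continuous_finset_sum _ fun j _ =>
    (continuous_norm.comp (continuous_apply j)).pow 2).add continuous_const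

lemma hess_eta {ε : ℝ} (hε : 0 < ε) (z : Fin n → ℂ) (hlt : normSq z + ε ^ 2 < 1) (j k : Fin n) :
    hess j k
      (fun w => -Real.log (normSq w + ε ^ 2) + Real.log (-Real.log (normSq w + ε ^ 2))) z =
      ((((-1 + (Real.log (normSq z + ε ^ 2))⁻¹) * (normSq z + ε ^ 2)⁻¹ : ℝ)) : ℂ) *
          (Pi.single j 1 : Fin n → ℂ) k +
        ((((-1 + (Real.log (normSq z + ε ^ 2))⁻¹) * (-((normSq z + ε ^ 2) ^ 2)⁻¹) +
            (normSq z + ε ^ 2)⁻¹ *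
              (-((Real.log (normSq z + ε ^ 2)) ^ 2)⁻¹ * (normSq z + ε ^ 2)⁻¹) : ℝ)) : ℂ) *
          (z k * (starRingEnd ℂ) (z j)) := by
  set s : ℝ := normSq z + ε ^ 2 with hsdef
  have hspos := S_pos hε z
  have hp : Real.log s < 0 := Real.log_neg hspos hlt
  -- the inner dbar function agrees near z with an explicit function
  have hU : IsOpen {w : Fin n → ℂ | normSq w + ε ^ 2 < 1} :=
    isOpen_lt (continuous_S) continuous_const
  have hmem : {w : Fin n → ℂ | normSq w + ε ^ 2 < 1} ∈ nhds z := hU.mem_nhds hlt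
  have heq : (fun w => dbar k (fun y =>
        (((-Real.log (normSq y + ε ^ 2) + Real.log (-Real.log (normSq y + ε ^ 2)) : ℝ)) : ℂ)) w)
      =ᶠ[nhds z] fun w =>
        ((((-1 + (Real.log (normSq w + ε ^ 2))⁻¹) * (normSq w + ε ^ 2)⁻¹ : ℝ)) : ℂ) * w k := by
    filter_upwards [hmem] with w hw
    exact dbar_of_real (hasFDerivAt_eta hε w hw) k
  rw [hess, dz, heq.fderiv_eq]
  -- now compute the derivative of the explicit function
  have hc1 : HasFDerivAt
      (fun w : Fin n → ℂ => -1 + (Real.log (normSq w + ε ^ 2))⁻¹)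
      ((-(Real.log s ^ 2)⁻¹ * s⁻¹) • LS z) z := by
    have := ((hasDerivAt_inv hp.ne).comp_hasFDerivAt z (hasFDerivAt_phi hε z)).const_add (-1)
    rwa [smul_smul] at this
  have hc2 := hasFDerivAt_Sinv hε z
  have hcc := hc1.mul hc2
  rw [smul_smul, smul_smul, ← add_smul] at hcc
  set γ : ℝ := (-1 + (Real.log s)⁻¹) * (-(s ^ 2)⁻¹) + s⁻¹ * (-(Real.log s ^ 2)⁻¹ * s⁻¹) with hγ
  have hcc' : HasFDerivAt
      (fun w : Fin n → ℂ => (-1 + (Real.log (normSq w + ε ^ 2))⁻¹) * (normSq w + ε ^ 2)⁻¹)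
      (γ • LS z) z := by
    refine hcc.congr_fderiv ?_
    congr 1
  have hg : HasFDerivAt (fun w : Fin n → ℂ =>
      ((((-1 + (Real.log (normSq w + ε ^ 2))⁻¹) * (normSq w + ε ^ 2)⁻¹ : ℝ)) : ℂ))
      (Complex.ofRealCLM.comp (γ • LS z)) z := Complex.ofRealCLM.hasFDerivAt.comp z hcc'
  have hpr : HasFDerivAt (fun w : Fin n → ℂ => w k)
      ((ContinuousLinearMap.proj k : (Fin n → ℂ) →L[ℂ] ℂ).restrictScalars ℝ) z :=
    ((ContinuousLinearMap.proj k : (Fin n → ℂ) →L[ℂ] ℂ).restrictScalars ℝ).hasFDerivAt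
  have hG := hg.fun_mul hpr
  rw [hG.fderiv]
  simp only [ContinuousLinearMap.add_apply, ContinuousLinearMap.smul_apply,
    ContinuousLinearMap.comp_apply, ContinuousLinearMap.coe_restrictScalars',
    ContinuousLinearMap.proj_apply, Complex.ofRealCLM_apply, LS_single_one, LS_single_I,
    smul_eq_mul, single_I]
  have hconj : (starRingEnd ℂ) (z j) =
      ((z j).re : ℂ) - ((z j).im : ℂ) * Complex.I := by
    simp [Complex.ext_iff]
  rw [hconj]
  push_cast
  ring_nf
  simp [Complex.I_sq]
  rw [hsdef]; push_cast; ring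

set_option maxHeartbeats 1000000 in
/-- Let `Ω ⊆ ℂⁿ` be bounded with `0 ∈ Ω` and `|z| < e^{-1}` on `Ω`. For (small) `ε > 0`
set `φ(z) = log(|z|² + ε²)`, `η = -φ + log(-φ)`, `λ = (1-φ)²`. Then on `Ω` one has the
`(1,1)`-form inequality `-i∂∂̄η - λ⁻¹ i∂η∧∂̄η ≥ i∂∂̄φ`, i.e. the difference of the
associated Hermitian forms is positive semidefinite at every point of `Ω`. -/
theorem eta_hessian_inequality
    (Ω : Set (Fin n → ℂ)) (hΩopen : IsOpen Ω) (hΩbdd : Bornology.IsBounded Ω)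
    (h0 : (0 : Fin n → ℂ) ∈ Ω)
    (hnorm : ∀ z ∈ Ω, Real.sqrt (normSq z) < Real.exp (-1))
    (ε : ℝ) (hε : 0 < ε) (hεsmall : ε ^ 2 < 1 - Real.exp (-2))
    (φ η lam : (Fin n → ℂ) → ℝ)
    (hφ : ∀ z, φ z = Real.log (normSq z + ε ^ 2))
    (hη : ∀ z, η z = -φ z + Real.log (-φ z))
    (hlam : ∀ z, lam z = (1 - φ z) ^ 2) :
    ∀ z ∈ Ω, ∀ ζ : Fin n → ℂ,
      (∑ j : Fin n, ∑ k : Fin n, (hess j k φ z) * ζ j * (starRingEnd ℂ) (ζ k)).re ≤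
      (∑ j : Fin n, ∑ k : Fin n,
        (-(hess j k η z) - ((lam z : ℝ) : ℂ)⁻¹ *
          (dz j (fun y => ((η y : ℝ) : ℂ)) z) *
          (starRingEnd ℂ) (dz k (fun y => ((η y : ℝ) : ℂ)) z)) *
        ζ j * (starRingEnd ℂ) (ζ k)).re := by
  have hφ' : φ = fun w => Real.log (normSq w + ε ^ 2) := funext hφ
  subst hφ'
  have hη' : η = fun w =>
      -Real.log (normSq w + ε ^ 2) + Real.log (-Real.log (normSq w + ε ^ 2)) :=
    funext fun w => by rw [hη w]
  subst hη'
  intro z hz ζ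
  -- basic facts about s and p
  set s : ℝ := normSq z + ε ^ 2 with hsdef
  have hspos : 0 < s := S_pos hε z
  have hlt : s < 1 := by
    have h1 : normSq z < Real.exp (-2) := by
      have := hnorm z hz
      have h2 : normSq z = Real.sqrt (normSq z) ^ 2 := (Real.sq_sqrt (normSq_nonneg' z)).symm
      rw [h2]
      calc Real.sqrt (normSq z) ^ 2 < Real.exp (-1) ^ 2 := by
            apply pow_lt_pow_left₀ this (Real.sqrt_nonneg _)
            norm_num
        _ = Real.exp (-2) := by rw [sq, ← Real.exp_add]; norm_num
      -- fallback
    linarith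
  have hp : Real.log s < 0 := Real.log_neg hspos hlt
  have hpne : Real.log s ≠ 0 := hp.ne
  have hsne : s ≠ 0 := hspos.ne'
  set p : ℝ := Real.log s with hpdef
  have hlamz : lam z = (1 - p) ^ 2 := hlam z
  have h1p : (1 : ℝ) - p ≠ 0 := by nlinarith
  -- nonvanishing of complex casts
  have hsne' : ((s : ℝ) : ℂ) ≠ 0 := Complex.ofReal_ne_zero.mpr hsne
  have hpne' : ((p : ℝ) : ℂ) ≠ 0 := Complex.ofReal_ne_zero.mpr hpne
  have h1p' : ((1 - p : ℝ) : ℂ) ≠ 0 := Complex.ofReal_ne_zero.mpr h1p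
  set C : ℝ := 1 - p⁻¹ with hCdef
  clear_value C
  clear_value p
  clear_value s
  have hlt' : normSq z + ε ^ 2 < 1 := hsdef ▸ hlt
  -- the key pointwise identity
  have key : ∀ j k : Fin n,
      (-(hess j k (fun w =>
          -Real.log (normSq w + ε ^ 2) + Real.log (-Real.log (normSq w + ε ^ 2))) z) -
        ((lam z : ℝ) : ℂ)⁻¹ *
          (dz j (fun y => (((-Real.log (normSq y + ε ^ 2) +
            Real.log (-Real.log (normSq y + ε ^ 2)) : ℝ)) : ℂ)) z) *
          (starRingEnd ℂ) (dz k (fun y => (((-Real.log (normSq y + ε ^ 2) +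
            Real.log (-Real.log (normSq y + ε ^ 2)) : ℝ)) : ℂ)) z)) =
      ((C : ℝ) : ℂ) * hess j k (fun w => Real.log (normSq w + ε ^ 2)) z := by
    intro j k
    rw [hess_eta hε z hlt', dz_eta hε z hlt', dz_eta hε z hlt', hess_phi hε z, hlamz]
    rw [← hsdef, ← hpdef, hCdef]
    simp only [map_mul, Complex.conj_conj, Complex.conj_ofReal]
    rw [show ((-1 + p⁻¹) * (-(s ^ 2)⁻¹) + s⁻¹ * (-(p ^ 2)⁻¹ * s⁻¹) : ℝ) =
        (1 - p⁻¹) * (s ^ 2)⁻¹ - ((1 - p) ^ 2)⁻¹ *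
          (((-1 + p⁻¹) * s⁻¹) * ((-1 + p⁻¹) * s⁻¹)) from by field_simp; ring]
    push_cast
    ring
  simp only [key]
  -- pull the constant out of the sum
  have hpull : ∑ j : Fin n, ∑ k : Fin n,
      ((C : ℝ) : ℂ) * hess j k (fun w => Real.log (normSq w + ε ^ 2)) z * ζ j *
        (starRingEnd ℂ) (ζ k) =
      ((C : ℝ) : ℂ) * ∑ j : Fin n, ∑ k : Fin n,
        hess j k (fun w => Real.log (normSq w + ε ^ 2)) z * ζ j * (starRingEnd ℂ) (ζ k) := by
    simp_rw [Finset.mul_sum]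
    congr 1; funext j; congr 1; funext k; ring
  rw [hpull]
  set Q : ℂ := ∑ j : Fin n, ∑ k : Fin n,
      hess j k (fun w => Real.log (normSq w + ε ^ 2)) z * ζ j * (starRingEnd ℂ) (ζ k) with hQdef
  rw [Complex.re_ofReal_mul]
  -- compute Q explicitly
  have hQ : Q = (((normSq ζ * s⁻¹ -
      Complex.normSq (∑ j, (starRingEnd ℂ) (z j) * ζ j) * (s ^ 2)⁻¹ : ℝ)) : ℂ) := by
    rw [hQdef]
    have hterm : ∀ j k : Fin n,
        hess j k (fun w => Real.log (normSq w + ε ^ 2)) z * ζ j * (starRingEnd ℂ) (ζ k) =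
        (Pi.single j 1 : Fin n → ℂ) k * ((s : ℝ) : ℂ)⁻¹ * ζ j * (starRingEnd ℂ) (ζ k) -
          ((s : ℝ) : ℂ)⁻¹ * ((s : ℝ) : ℂ)⁻¹ * ((starRingEnd ℂ) (z j) * ζ j) *
            (z k * (starRingEnd ℂ) (ζ k)) := by
      intro j k
      rw [hess_phi hε z, ← hsdef]
      have : ((((s:ℝ)) : ℂ) ^ 2)⁻¹ = ((s:ℝ) : ℂ)⁻¹ * ((s:ℝ) : ℂ)⁻¹ := by
        rw [sq, mul_inv]
      rw [this]; ring
    simp_rw [hterm, Finset.sum_sub_distrib]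
    have hsum1 : ∑ j : Fin n, ∑ k : Fin n,
        (Pi.single j 1 : Fin n → ℂ) k * ((s : ℝ) : ℂ)⁻¹ * ζ j * (starRingEnd ℂ) (ζ k) =
        ((normSq ζ : ℝ) : ℂ) * ((s : ℝ) : ℂ)⁻¹ := by
      have hj : ∀ j : Fin n, ∑ k : Fin n,
          (Pi.single j 1 : Fin n → ℂ) k * ((s : ℝ) : ℂ)⁻¹ * ζ j * (starRingEnd ℂ) (ζ k) =
          ((s : ℝ) : ℂ)⁻¹ * (ζ j * (starRingEnd ℂ) (ζ j)) := by
        intro j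
        rw [Finset.sum_eq_single j]
        · simp only [Pi.single_eq_same, one_mul]; ring
        · intro b _ hb; simp [Pi.single_apply, hb.symm]
        · simp
      simp_rw [hj]
      rw [← Finset.mul_sum]
      have : ∑ j : Fin n, ζ j * (starRingEnd ℂ) (ζ j) = ((normSq ζ : ℝ) : ℂ) := by
        unfold normSq
        push_cast
        congr 1; funext j
        rw [Complex.mul_conj, ← Complex.sq_norm]
        push_cast; ring
      rw [this]; ring
    have hsum2 : ∑ j : Fin n, ∑ k : Fin n,
        ((s : ℝ) : ℂ)⁻¹ * ((s : ℝ) : ℂ)⁻¹ * ((starRingEnd ℂ) (z j) * ζ j) *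
          (z k * (starRingEnd ℂ) (ζ k)) =
        ((Complex.normSq (∑ j, (starRingEnd ℂ) (z j) * ζ j) : ℝ) : ℂ) *
          (((s : ℝ) : ℂ)⁻¹ * ((s : ℝ) : ℂ)⁻¹) := by
      have step1 : ∀ j : Fin n, ∑ k : Fin n,
          ((s : ℝ) : ℂ)⁻¹ * ((s : ℝ) : ℂ)⁻¹ * ((starRingEnd ℂ) (z j) * ζ j) *
            (z k * (starRingEnd ℂ) (ζ k)) =
          (((s : ℝ) : ℂ)⁻¹ * ((s : ℝ) : ℂ)⁻¹ * ((starRingEnd ℂ) (z j) * ζ j)) *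
            ∑ k : Fin n, z k * (starRingEnd ℂ) (ζ k) := fun j => (Finset.mul_sum _ _ _).symm
      simp_rw [step1]
      rw [← Finset.sum_mul, ← Finset.mul_sum]
      have ha : ∑ k : Fin n, z k * (starRingEnd ℂ) (ζ k) =
          (starRingEnd ℂ) (∑ j, (starRingEnd ℂ) (z j) * ζ j) := by
        rw [map_sum]
        refine Finset.sum_congr rfl fun k _ => ?_
        rw [map_mul, Complex.conj_conj]
      rw [ha, mul_assoc, Complex.mul_conj, mul_comm]
    rw [hsum1, hsum2]
    push_cast
    ring
  -- hence Q.re is the real expression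
  set T : ℝ := normSq ζ with hT
  set nsa : ℝ := Complex.normSq (∑ j, (starRingEnd ℂ) (z j) * ζ j) with hnsa
  have hQre : Q.re = T * s⁻¹ - nsa * (s ^ 2)⁻¹ := by rw [hQ]; exact Complex.ofReal_re _
  rw [hQre]
  -- Cauchy–Schwarz: nsa ≤ normSq z * T ≤ s * T
  have hTnn : 0 ≤ T := normSq_nonneg' ζ
  have hcs : nsa ≤ s * T := by
    have habs : ‖∑ j, (starRingEnd ℂ) (z j) * ζ j‖ ≤
        ∑ j, ‖z j‖ * ‖ζ j‖ := by
      refine (norm_sum_le _ _).trans_eq ?_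
      congr 1; funext j
      rw [norm_mul, Complex.norm_conj]
    have h1 : nsa ≤ (∑ j, ‖z j‖ * ‖ζ j‖) ^ 2 := by
      rw [hnsa, ← Complex.sq_norm]
      exact pow_le_pow_left₀ (norm_nonneg _) habs 2
    have h2 : (∑ j, ‖z j‖ * ‖ζ j‖) ^ 2 ≤
        (∑ j, ‖z j‖ ^ 2) * ∑ j, ‖ζ j‖ ^ 2 :=
      Finset.sum_mul_sq_le_sq_mul_sq Finset.univ _ _
    have h3 : (∑ j, ‖z j‖ ^ 2) * (∑ j, ‖ζ j‖ ^ 2) ≤ s * T := by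
      have : (∑ j, ‖z j‖ ^ 2) = normSq z := rfl
      have hT' : (∑ j, ‖ζ j‖ ^ 2) = T := rfl
      rw [this, hT']
      have : normSq z ≤ s := by rw [hsdef]; nlinarith
      exact mul_le_mul_of_nonneg_right this hTnn
    linarith
  -- positivity of the Hessian form of φ
  have hQnn : 0 ≤ T * s⁻¹ - nsa * (s ^ 2)⁻¹ := by
    have hsi : 0 < s⁻¹ := inv_pos.mpr hspos
    have h3 : nsa * (s⁻¹ * s⁻¹) ≤ (s * T) * (s⁻¹ * s⁻¹) :=
      mul_le_mul_of_nonneg_right hcs (by positivity)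
    have h4 : (s * T) * (s⁻¹ * s⁻¹) = T * s⁻¹ := by field_simp
    have h5 : (s ^ 2)⁻¹ = s⁻¹ * s⁻¹ := by rw [sq, mul_inv]
    rw [h5]; linarith
  have hC1 : 1 ≤ C := by
    rw [hCdef]
    have : p⁻¹ < 0 := inv_neg''.mpr hp
    linarith
  nlinarith [mul_nonneg (sub_nonneg.mpr hC1) hQnn]
end

section
/- Let E be a compact polar subset of the unit disc 𝔻 ⊂ ℂ, let A(r,1) = {r < |z_{n+1}| < 1} with E ⊂ 𝔻_r, and let f be holomorphic on 𝔻ⁿ × A(r,1). Suppose there exists a set A ⊂ 𝔻ⁿ of positive Lebesgue measure such that for every z' ∈ A the function f(z', ·) extends holomorphically to 𝔻. Then f extends to a holomorphic function on 𝔻^{n+1}. -/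
open MeasureTheory Metric

/-- Subharmonicity of an `EReal`-valued function on a subset of `ℂ`. -/
def SubharmonicOn (f : ℂ → EReal) (s : Set ℂ) : Prop :=
  UpperSemicontinuousOn f s ∧
  ∀ x ∈ s, ∀ r > (0 : ℝ), closedBall x r ⊆ s →
    f x ≤ ((⨍ y in closedBall x r, (f y).toReal) : ℝ)

/-- `E ⊆ ℂ` is polar. -/
def IsPolar (E : Set ℂ) : Prop :=
  ∀ x ∈ E, ∃ U : Set ℂ, IsOpen U ∧ x ∈ U ∧
    ∃ ψ : ℂ → EReal, SubharmonicOn ψ U ∧ ¬ (∀ z ∈ U, ψ z = ⊥) ∧ ∀ z ∈ E ∩ U, ψ z = ⊥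

/-- The open unit polydisc in `ℂⁿ`. -/
def polydisc (n : ℕ) : Set (Fin n → ℂ) := {z | ∀ i, ‖z i‖ < 1}

lemma isOpen_polydisc (n : ℕ) : IsOpen (polydisc n) := by
  have : polydisc n = ⋂ i : Fin n, (fun z : Fin n → ℂ => z i) ⁻¹' (ball 0 1) := by
    ext z; simp [polydisc, Complex.dist_eq]
  rw [this]
  exact isOpen_iInter_of_finite fun i => (isOpen_ball).preimage (continuous_apply i)

lemma countable_of_isolated {s : Set ℂ}
    (h : ∀ x ∈ s, ∃ ε > (0:ℝ), ∀ y ∈ s, y ∈ ball x ε → y = x) : s.Countable := by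
  choose! ε hε hsep using h
  have key : ∀ x ∈ s, ∀ y ∈ s, ε y ≤ ε x → ∀ z : ℂ,
      z ∈ ball x (ε x / 2) → z ∈ ball y (ε y / 2) → y = x := by
    intro x hx y hy hle z hzx hzy
    apply hsep x hx y hy
    rw [mem_ball] at hzx hzy ⊢
    have h3 : dist y x ≤ dist y z + dist z x := dist_triangle _ _ _
    rw [dist_comm y z] at h3
    linarith
  have : Countable s := by
    refine Pairwise.countable_of_isOpen_disjoint
      (s := fun x : s => ball (x : ℂ) (ε x / 2)) ?_ (fun x => isOpen_ball) ?_
    · rintro ⟨x, hx⟩ ⟨y, hy⟩ hne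
      refine Set.disjoint_left.2 fun z hzx hzy => hne ?_
      rcases le_total (ε y) (ε x) with hle | hle
      · exact Subtype.ext (key x hx y hy hle z hzx hzy).symm
      · exact Subtype.ext (key y hy x hx hle z hzy hzx)
    · exact fun x => ⟨x, mem_ball_self (half_pos (hε x x.2))⟩
  exact Set.countable_coe_iff.mp this

/-- Zero set of a nonconstant-zero holomorphic function on the unit disc is countable. -/
lemma countable_zero_set_1d {g : ℂ → ℂ} (hg : DifferentiableOn ℂ g (ball (0:ℂ) 1))
    {w₀ : ℂ} (hw₀ : w₀ ∈ ball (0:ℂ) 1) (hne : g w₀ ≠ 0) :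
    {w | w ∈ ball (0:ℂ) 1 ∧ g w = 0}.Countable := by
  have han : AnalyticOnNhd ℂ g (ball (0:ℂ) 1) := hg.analyticOnNhd isOpen_ball
  apply countable_of_isolated
  rintro x ⟨hx, hgx⟩
  rcases (han x hx).eventually_eq_zero_or_eventually_ne_zero with h | h
  · exfalso
    have := han.eqOn_zero_of_preconnected_of_eventuallyEq_zero
      (convex_ball (0:ℂ) 1).isPreconnected hx h
    exact hne (this hw₀)
  · rw [Filter.eventually_iff, mem_nhdsWithin] at h
    obtain ⟨u, hu, hxu, hsub⟩ := h
    obtain ⟨ε, hε, hball⟩ := Metric.isOpen_iff.1 hu x hxu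
    refine ⟨ε, hε, ?_⟩
    rintro y ⟨hy, hgy⟩ hyb
    by_contra hxy
    exact hsub ⟨hball hyb, hxy⟩ hgy

lemma differentiable_consMap (n : ℕ) :
    Differentiable ℂ (fun p : ℂ × (Fin n → ℂ) => (Fin.cons p.1 p.2 : Fin (n+1) → ℂ)) := by
  rw [differentiable_pi]
  intro i
  refine Fin.cases ?_ ?_ i
  · simp only [Fin.cons_zero]; exact differentiable_fst
  · intro j
    simp only [Fin.cons_succ]
    exact (ContinuousLinearMap.proj (R := ℂ) (φ := fun _ : Fin n => ℂ) j).differentiable.comp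
      differentiable_snd

lemma cons_mem_polydisc {n : ℕ} {w : ℂ} {y : Fin n → ℂ} (hw : ‖w‖ < 1)
    (hy : y ∈ polydisc n) : (Fin.cons w y : Fin (n+1) → ℂ) ∈ polydisc (n+1) := by
  intro i
  refine Fin.cases ?_ ?_ i
  · simpa using hw
  · intro j; simpa using hy j

lemma zero_set_null :
    ∀ (n : ℕ) (g : (Fin n → ℂ) → ℂ), DifferentiableOn ℂ g (polydisc n) →
      ∀ (a : Fin n → ℂ), a ∈ polydisc n → g a ≠ 0 →
      volume {z | z ∈ polydisc n ∧ g z = 0} = 0 := by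
  intro n
  induction n with
  | zero =>
    intro g hg a ha hga
    have : {z : Fin 0 → ℂ | z ∈ polydisc 0 ∧ g z = 0} = ∅ := by
      ext z
      simp only [Set.mem_setOf_eq, Set.mem_empty_iff_false, iff_false, not_and]
      intro _ hz
      exact hga (by rwa [Subsingleton.elim a z])
    simp [this]
  | succ n IH =>
    intro g hg a ha hga
    set e := MeasurableEquiv.piFinSuccAbove (fun _ : Fin (n+1) => ℂ) 0 with he
    set O : Set (ℂ × (Fin n → ℂ)) := (ball (0:ℂ) 1) ×ˢ polydisc n with hO
    have hOopen : IsOpen O := isOpen_ball.prod (isOpen_polydisc n)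
    set G : ℂ × (Fin n → ℂ) → ℂ := fun q => g (Fin.cons q.1 q.2) with hGdef
    have hmaps : ∀ q ∈ O, (Fin.cons q.1 q.2 : Fin (n+1) → ℂ) ∈ polydisc (n+1) := by
      rintro q ⟨hq1, hq2⟩
      exact cons_mem_polydisc (by simpa [Complex.dist_eq] using hq1) hq2
    have hGc : ContinuousOn G O := by
      refine (hg.continuousOn).comp (differentiable_consMap n).continuous.continuousOn hmaps
    set Z : Set (ℂ × (Fin n → ℂ)) := {q | q ∈ O ∧ G q = 0} with hZ
    -- measurability of Z
    have hZmeas : MeasurableSet Z := by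
      obtain ⟨u, hu, huO⟩ := (_root_.continuousOn_iff'.mp hGc) {(0:ℂ)}ᶜ (isOpen_compl_singleton)
      have : Z = O ∩ (u ∩ O)ᶜ := by
        ext q
        constructor
        · rintro ⟨hqO, hGq⟩
          refine ⟨hqO, fun hq => ?_⟩
          have : q ∈ G ⁻¹' {(0:ℂ)}ᶜ ∩ O := by rw [huO]; exact hq
          exact this.1 hGq
        · rintro ⟨hqO, hq⟩
          refine ⟨hqO, by_contra fun hGq => hq ?_⟩
          rw [← huO]; exact ⟨hGq, hqO⟩
      rw [this]
      exact (hOopen.measurableSet).inter ((hu.measurableSet.inter hOopen.measurableSet).compl)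
    -- transfer via measurable equiv
    have hpre : {z | z ∈ polydisc (n+1) ∧ g z = 0} = ⇑e ⁻¹' Z := by
      ext z
      have hez : e z = (z 0, fun j => z j.succ) := by
        simp [he, MeasurableEquiv.piFinSuccAbove, Fin.zero_succAbove]; rfl
      simp only [Set.mem_setOf_eq, Set.mem_preimage, hez, hZ, hO, hGdef, Set.mem_prod]
      rw [show (Fin.cons (z 0) (fun j => z j.succ) : Fin (n+1) → ℂ) = z from Fin.cons_self_tail z]
      constructor
      · rintro ⟨hz, hgz⟩
        exact ⟨⟨by simpa [Complex.dist_eq] using hz 0, fun j => hz j.succ⟩, hgz⟩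
      · rintro ⟨⟨h0, hs⟩, hgz⟩
        refine ⟨?_, hgz⟩
        intro i
        refine Fin.cases ?_ ?_ i
        · simpa [Complex.dist_eq] using h0
        · exact hs
    have hmp := MeasureTheory.volume_preserving_piFinSuccAbove (fun _ : Fin (n+1) => ℂ) 0
    rw [hpre, hmp.measure_preimage hZmeas.nullMeasurableSet]
    have hvol : (volume : Measure (ℂ × (Fin n → ℂ))) = (volume : Measure ℂ).prod volume :=
      Measure.volume_eq_prod ℂ (Fin n → ℂ)
    rw [hvol, MeasureTheory.Measure.measure_prod_null hZmeas]
    rw [Filter.EventuallyEq, Filter.eventually_iff] at *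
    -- a.e. slice is null
    set gtail : ℂ → ℂ := fun w => g (Fin.cons w (Fin.tail a)) with hgt
    have htail_mem : Fin.tail a ∈ polydisc n := fun j => ha j.succ
    have hgt_diff : DifferentiableOn ℂ gtail (ball (0:ℂ) 1) := by
      refine hg.comp ?_ ?_
      · exact ((differentiable_consMap n).comp
          ((differentiable_fun_id).prodMk (differentiable_const _))).differentiableOn
      · intro w hw
        exact cons_mem_polydisc (by simpa [Complex.dist_eq] using hw) htail_mem
    have hgt_ne : gtail (a 0) ≠ 0 := by
      rw [hgt]
      simpa [Fin.cons_self_tail] using hga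
    have ha0 : a 0 ∈ ball (0:ℂ) 1 := by simpa [mem_ball, Complex.dist_eq] using ha 0
    have hBad : volume {w | w ∈ ball (0:ℂ) 1 ∧ gtail w = 0} = 0 :=
      (countable_zero_set_1d hgt_diff ha0 hgt_ne).measure_zero _
    filter_upwards [measure_eq_zero_iff_ae_notMem.mp hBad] with w hw
    by_cases hw1 : w ∈ ball (0:ℂ) 1
    · have hgw : gtail w ≠ 0 := fun h => hw ⟨hw1, h⟩
      have hIH := IH (fun y => g (Fin.cons w y))
        (hg.comp ((differentiable_consMap n).comp
            ((differentiable_const _).prodMk differentiable_fun_id)).differentiableOn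
          (fun y hy => cons_mem_polydisc (by simpa [Complex.dist_eq] using hw1) hy))
        (Fin.tail a) htail_mem hgw
      refine measure_mono_null ?_ hIH
      rintro y ⟨⟨_, hy2⟩, hGy⟩
      exact ⟨hy2, hGy⟩
    · have : Prod.mk w ⁻¹' Z = ∅ := by
        ext y
        simp only [Set.mem_preimage, hZ, hO, Set.mem_setOf_eq, Set.mem_prod,
          Set.mem_empty_iff_false, iff_false, not_and]
        intro h
        exact absurd h.1 hw1
      simp [this]

/-- Identity theorem: holomorphic on polydisc, vanishing on a set of positive measure,
vanishes identically. -/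
lemma eq_zero_of_pos_measure {n : ℕ} {H : (Fin n → ℂ) → ℂ}
    (hH : DifferentiableOn ℂ H (polydisc n)) {S : Set (Fin n → ℂ)} (hS : S ⊆ polydisc n)
    (hSpos : 0 < volume S) (hzero : ∀ z ∈ S, H z = 0) :
    ∀ z ∈ polydisc n, H z = 0 := by
  by_contra h
  push_neg at h
  obtain ⟨a, ha, hHa⟩ := h
  have h0 := zero_set_null n H hH a ha hHa
  have : volume S = 0 :=
    measure_mono_null (fun z hz => show z ∈ {z | z ∈ polydisc n ∧ H z = 0} from ⟨hS hz, hzero z hz⟩) h0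
  exact absurd this hSpos.ne'

lemma norm_fderiv_le_of_ball {P : Type*} [NormedAddCommGroup P] [NormedSpace ℂ P]
    {φ : P → ℂ} {O : Set P} (hO : IsOpen O) (hφ : DifferentiableOn ℂ φ O)
    {x : P} {δ M : ℝ} (hδ : 0 < δ) (hsub : closedBall x δ ⊆ O)
    (hM : ∀ y ∈ closedBall x δ, ‖φ y‖ ≤ M) : ‖fderiv ℂ φ x‖ ≤ M / δ := by
  have hM0 : 0 ≤ M := le_trans (norm_nonneg _) (hM x (mem_closedBall_self hδ.le))
  refine ContinuousLinearMap.opNorm_le_bound _ (div_nonneg hM0 hδ.le) fun v => ?_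
  rcases eq_or_ne v 0 with rfl | hv
  · simp
  have hvn : 0 < ‖v‖ := norm_pos_iff.2 hv
  set s := δ / ‖v‖ with hs_def
  have hs : 0 < s := div_pos hδ hvn
  set g : ℂ → ℂ := fun t => φ (x + t • v) with hg
  have hline : ∀ t : ℂ, ‖t‖ ≤ s → x + t • v ∈ closedBall x δ := by
    intro t ht
    rw [mem_closedBall, dist_eq_norm, add_sub_cancel_left, norm_smul]
    calc ‖t‖ * ‖v‖ ≤ s * ‖v‖ := by nlinarith
      _ = δ := by rw [hs_def]; exact div_mul_cancel₀ δ hvn.ne'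
  have hcont : ContinuousOn g (closedBall (0:ℂ) s) := by
    refine (hφ.continuousOn.mono (fun y hy => hsub hy)).comp ?_ ?_
    · exact (continuous_const.add (continuous_id.smul continuous_const)).continuousOn
    · intro t ht
      exact hline t (by simpa [Complex.dist_eq] using ht)
  have hdiff : DifferentiableOn ℂ g (ball (0:ℂ) s) := by
    intro t ht
    have ht' : ‖t‖ ≤ s := by
      have := mem_ball_zero_iff.mp ht
      exact this.le
    have hmem : x + t • v ∈ O := hsub (hline t ht')
    exact ((hφ.differentiableAt (hO.mem_nhds hmem)).comp t
      ((differentiable_const x).add ((differentiable_fun_id).smul_const v) t)).differentiableWithinAt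
  have hDCC : DiffContOnCl ℂ g (ball (0:ℂ) s) := ⟨hdiff, hcont.mono closure_ball_subset_closedBall⟩
  have hinner : HasDerivAt (fun t : ℂ => x + t • v) v 0 := by
    simpa using ((hasDerivAt_id (0:ℂ)).smul_const v).const_add x
  have hd : HasDerivAt g (fderiv ℂ φ x v) 0 := by
    have hx : x + (0:ℂ) • v = x := by simp
    have hφx : DifferentiableAt ℂ φ x :=
      hφ.differentiableAt (hO.mem_nhds (hsub (mem_closedBall_self hδ.le)))
    have hφx' : HasFDerivAt φ (fderiv ℂ φ x) (x + (0:ℂ) • v) := by rw [hx]; exact hφx.hasFDerivAt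
    exact hφx'.comp_hasDerivAt 0 hinner
  have hbound := Complex.norm_deriv_le_of_forall_mem_sphere_norm_le hs hDCC
    (fun z hz => hM _ (hline z (by simpa using (mem_sphere_zero_iff_norm.mp hz).le)))
  rw [hd.deriv] at hbound
  calc ‖fderiv ℂ φ x v‖ ≤ M / s := hbound
    _ = M / δ * ‖v‖ := by rw [hs_def, div_div_eq_mul_div, div_mul_eq_mul_div]

lemma abs_of_sphere {ζ : ℂ} {ρ : ℝ} (h : ζ ∈ sphere (0:ℂ) ρ) : ‖ζ‖ = ρ := by
  simpa using mem_sphere_zero_iff_norm.mp h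

lemma annulus_cauchy {g : ℂ → ℂ} {r R : ℝ} (hr : 0 < r) (hrR : r < R) {w : ℂ}
    (hw1 : r < ‖w‖) (hw2 : ‖w‖ < R)
    (hd : ∀ ζ : ℂ, r ≤ ‖ζ‖ → ‖ζ‖ ≤ R → DifferentiableAt ℂ g ζ) :
    (∮ ζ in C(0, R), (ζ - w)⁻¹ • g ζ) - (∮ ζ in C(0, r), (ζ - w)⁻¹ • g ζ)
      = (2 * Real.pi * Complex.I : ℂ) • g w := by
  set d : ℂ → ℂ := dslope g w with hd_def
  have hgw : DifferentiableAt ℂ g w := hd w hw1.le hw2.le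
  have hcont : ContinuousOn d (closedBall (0:ℂ) R \ ball (0:ℂ) r) := by
    rintro ζ ⟨h1, h2⟩
    rw [mem_closedBall_zero_iff] at h1
    rw [mem_ball_zero_iff, not_lt] at h2
    rcases eq_or_ne ζ w with rfl | hne
    · exact ((continuousAt_dslope_same).2 hgw).continuousWithinAt
    · exact ((continuousAt_dslope_of_ne hne).2 (hd ζ h2 h1).continuousAt).continuousWithinAt
  have hdiff : ∀ ζ ∈ (ball (0:ℂ) R \ closedBall (0:ℂ) r) \ ({w} : Set ℂ),
      DifferentiableAt ℂ d ζ := by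
    rintro ζ ⟨⟨h1, h2⟩, hne⟩
    rw [mem_ball_zero_iff] at h1
    rw [mem_closedBall_zero_iff, not_le] at h2
    exact (differentiableAt_dslope_of_ne (by simpa using hne)).2 (hd ζ h2.le h1.le)
  have hGoursat : (∮ ζ in C(0, R), d ζ) = ∮ ζ in C(0, r), d ζ :=
    Complex.circleIntegral_eq_of_differentiable_on_annulus_off_countable hr hrR.le
      (Set.countable_singleton w) hcont hdiff
  have hsplit : ∀ ρ : ℝ, 0 < ρ → ‖w‖ ≠ ρ → r ≤ ρ → ρ ≤ R →
      (∮ ζ in C(0, ρ), (ζ - w)⁻¹ • g ζ)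
        = (∮ ζ in C(0, ρ), d ζ) + g w • ∮ ζ in C(0, ρ), (ζ - w)⁻¹ := by
    intro ρ hρ hwρ hrρ hρR
    have hsub : ∀ ζ ∈ sphere (0:ℂ) ρ, ζ ≠ w := by
      intro ζ hζ h
      exact hwρ (by rw [← h]; exact abs_of_sphere hζ)
    have hint0 : CircleIntegrable (fun ζ : ℂ => (ζ - w)⁻¹ • g ζ) 0 ρ := by
      apply ContinuousOn.circleIntegrable hρ.le
      intro ζ hζ
      have hab := abs_of_sphere hζ
      refine ContinuousWithinAt.fun_smul ?_ ?_
      · exact (ContinuousAt.continuousWithinAt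
          ((continuousAt_id.sub continuousAt_const).inv₀ (sub_ne_zero.2 (hsub ζ hζ))))
      · exact ((hd ζ (by rw [hab]; exact hrρ) (by rw [hab]; exact hρR)).continuousAt).continuousWithinAt
    have hint2 : CircleIntegrable (fun ζ : ℂ => g w • (ζ - w)⁻¹) 0 ρ := by
      apply ContinuousOn.circleIntegrable hρ.le
      refine continuousOn_const.fun_smul ?_
      intro ζ hζ
      exact (ContinuousAt.continuousWithinAt
        ((continuousAt_id.sub continuousAt_const).inv₀ (sub_ne_zero.2 (hsub ζ hζ))))
    have key : (∮ ζ in C(0, ρ), (ζ - w)⁻¹ • g ζ) - (∮ ζ in C(0, ρ), g w • (ζ - w)⁻¹)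
        = ∮ ζ in C(0, ρ), d ζ := by
      rw [← circleIntegral.integral_sub hint0 hint2]
      apply circleIntegral.integral_congr hρ.le
      intro ζ hζ
      have hne := hsub ζ hζ
      simp only [hd_def, dslope_of_ne g hne, slope_def_field, smul_eq_mul]
      field_simp [sub_ne_zero.2 hne]
    have : (∮ ζ in C(0, ρ), g w • (ζ - w)⁻¹) = g w • ∮ ζ in C(0, ρ), (ζ - w)⁻¹ :=
      circleIntegral.integral_smul (g w) _ _ _
    rw [← this, ← key]
    ring
  have hR := hsplit R (hr.trans hrR) hw2.ne hrR.le le_rfl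
  have hr' := hsplit r hr hw1.ne' le_rfl hrR.le
  have hinR : (∮ ζ in C(0, R), (ζ - w)⁻¹) = 2 * Real.pi * Complex.I :=
    circleIntegral.integral_sub_inv_of_mem_ball (by
      rw [mem_ball_zero_iff]; exact hw2)
  have hinr : (∮ ζ in C(0, r), (ζ - w)⁻¹) = 0 := by
    apply Complex.circleIntegral_eq_zero_of_differentiable_on_off_countable hr.le
      Set.countable_empty
    · intro ζ hζ
      rw [mem_closedBall_zero_iff] at hζ
      have : ζ - w ≠ 0 := by
        intro h
        rw [sub_eq_zero] at h
        subst h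
        exact absurd hζ (not_le.2 hw1)
      exact (ContinuousAt.continuousWithinAt
        ((continuousAt_id.sub continuousAt_const).inv₀ this))
    · rintro ζ ⟨hζ, -⟩
      rw [mem_ball_zero_iff] at hζ
      have : ζ - w ≠ 0 := by
        intro h
        rw [sub_eq_zero] at h
        subst h
        exact absurd hζ (not_lt.2 hw1.le)
      exact (differentiableAt_id.sub (differentiableAt_const _)).inv this
  rw [hR, hr', hGoursat, hinR, hinr]
  simp [smul_eq_mul]
  ring

section param
variable {n : ℕ}
local notation "P" => (Fin n → ℂ) × ℂ

set_option maxHeartbeats 2000000 in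
set_option synthInstance.maxHeartbeats 1000000 in
lemma differentiableAt_circleIntegral_param
    {f : P → ℂ} {U : Set P} (hU : IsOpen U)
    (hf : DifferentiableOn ℂ f U) {ρ : ℝ} (hρ : 0 < ρ) {a : Fin n → ℂ} {b : ℂ}
    (hb : ‖b‖ < ρ) (hsph : ∀ ζ ∈ sphere (0:ℂ) ρ, ((a, ζ) : P) ∈ U) :
    DifferentiableAt ℂ (fun p : P =>
      ∮ ζ in C(0, ρ), (ζ - p.2)⁻¹ • f (p.1, ζ)) (a, b) := by
  classical
  -- geometry: a margin ε
  have hKcomp : IsCompact (({a} : Set (Fin n → ℂ)) ×ˢ sphere (0:ℂ) ρ) :=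
    isCompact_singleton.prod (isCompact_sphere _ _)
  have hKU : (({a} : Set (Fin n → ℂ)) ×ˢ sphere (0:ℂ) ρ) ⊆ U := by
    rintro ⟨z, ζ⟩ ⟨hz, hζ⟩
    rcases hz with rfl
    exact hsph ζ hζ
  obtain ⟨δ, hδ, hthick⟩ := hKcomp.exists_thickening_subset_open hU hKU
  set ε : ℝ := min (δ/4) ((ρ - ‖b‖)/4) with hε_def
  have hε : 0 < ε := lt_min (by linarith) (by have := hb; linarith)
  have hεδ : 3*ε < δ := by
    have : ε ≤ δ/4 := min_le_left _ _
    linarith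
  have hερ : ‖b‖ + 3*ε ≤ ρ - ε := by
    have : ε ≤ (ρ - ‖b‖)/4 := min_le_right _ _
    linarith
  -- membership facts
  have F1 : ∀ z' : Fin n → ℂ, dist z' a ≤ 3*ε → ∀ ζ ∈ sphere (0:ℂ) ρ, ((z', ζ) : P) ∈ U := by
    intro z' hz' ζ hζ
    apply hthick
    rw [Metric.mem_thickening_iff]
    refine ⟨(a, ζ), ⟨rfl, hζ⟩, ?_⟩
    rw [Prod.dist_eq]
    simp only [dist_self]
    have : max (dist z' a) (0:ℝ) ≤ 3*ε := by
      simp only [max_le_iff]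
      exact ⟨hz', by positivity⟩
    exact lt_of_le_of_lt this hεδ
  have F2 : ∀ w : ℂ, dist w b ≤ 3*ε → ‖w‖ ≤ ρ - ε := by
    intro w hw
    calc ‖w‖ ≤ ‖w - b‖ + ‖b‖ := by
          have := norm_add_le (w - b) b; simpa [sub_add_cancel] using this
      _ ≤ ‖b‖ + 3*ε := by
          rw [Complex.dist_eq] at hw; linarith
      _ ≤ ρ - ε := hερ
  have Fne : ∀ (ζ : ℂ), ζ ∈ sphere (0:ℂ) ρ → ∀ w : ℂ, dist w b ≤ 3*ε → ζ - w ≠ 0 := by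
    intro ζ hζ w hw h
    rw [sub_eq_zero] at h
    have h1 : ‖ζ‖ = ρ := by
      simpa using mem_sphere_zero_iff_norm.mp hζ
    have := F2 w hw
    rw [← h] at this
    rw [h1] at this
    linarith
  -- the open set where the slice functions live
  set O : Set P := ball (a, b) (3*ε) with hO_def
  have hO : IsOpen O := isOpen_ball
  have hφdiff : ∀ ζ ∈ sphere (0:ℂ) ρ,
      DifferentiableOn ℂ (fun p : P => (ζ - p.2)⁻¹ * f (p.1, ζ)) O := by
    intro ζ hζ p hp
    rw [hO_def, mem_ball, Prod.dist_eq, max_lt_iff] at hp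
    have hp1 : dist p.1 a ≤ 3*ε := hp.1.le
    have hp2 : dist p.2 b ≤ 3*ε := hp.2.le
    have hfU : DifferentiableAt ℂ f (p.1, ζ) :=
      hf.differentiableAt (hU.mem_nhds (F1 p.1 hp1 ζ hζ))
    have h1 : DifferentiableAt ℂ (fun q : P => (ζ - q.2)⁻¹) p :=
      ((differentiable_const ζ).sub differentiable_snd).differentiableAt.inv
        (Fne ζ hζ p.2 hp2)
    have h2 : DifferentiableAt ℂ (fun q : P => f (q.1, ζ)) p :=
      hfU.comp p (differentiable_fst.prodMk (differentiable_const ζ)).differentiableAt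
    exact (h1.mul h2).differentiableWithinAt
  -- global bound M for f on compact set
  obtain ⟨M, hM⟩ : ∃ M, ∀ q ∈ (closedBall a (3*ε)) ×ˢ sphere (0:ℂ) ρ, ‖f q‖ ≤ M := by
    have hcomp : IsCompact ((closedBall a (3*ε)) ×ˢ sphere (0:ℂ) ρ) :=
      (isCompact_closedBall _ _).prod (isCompact_sphere _ _)
    have hsubU : (closedBall a (3*ε)) ×ˢ sphere (0:ℂ) ρ ⊆ U := by
      rintro ⟨z, ζ⟩ ⟨hz, hζ⟩
      exact F1 z (mem_closedBall.mp hz) ζ hζ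
    obtain ⟨M, hM⟩ := hcomp.exists_bound_of_continuousOn (hf.continuousOn.mono hsubU)
    exact ⟨M, hM⟩
  -- bound for slice functions on the 2ε-closedBall
  have hφbound : ∀ ζ ∈ sphere (0:ℂ) ρ, ∀ p ∈ closedBall ((a, b) : P) (2*ε),
      ‖(ζ - p.2)⁻¹ * f (p.1, ζ)‖ ≤ M / ε := by
    intro ζ hζ p hp
    rw [mem_closedBall, Prod.dist_eq, max_le_iff] at hp
    have hp1 : dist p.1 a ≤ 3*ε := hp.1.trans (by linarith)
    have hp2 : dist p.2 b ≤ 3*ε := hp.2.trans (by linarith)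
    have h1 : ‖ζ‖ = ρ := by
      simpa using mem_sphere_zero_iff_norm.mp hζ
    have habs : ε ≤ ‖ζ - p.2‖ := by
      have h2 := F2 p.2 hp2
      calc ε = ρ - (ρ - ε) := by ring
        _ ≤ ‖ζ‖ - ‖p.2‖ := by rw [h1]; linarith
        _ ≤ ‖ζ - p.2‖ := by
            have h4 : ‖ζ‖ - ‖p.2‖ ≤ ‖ζ - p.2‖ := by
              simpa using norm_sub_norm_le ζ p.2
            linarith
    have hfb : ‖f (p.1, ζ)‖ ≤ M := hM (p.1, ζ) ⟨mem_closedBall.mpr hp1, hζ⟩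
    have hMnn : 0 ≤ M := le_trans (norm_nonneg _) (hM (a, ζ) ⟨mem_closedBall_self (by positivity), hζ⟩)
    rw [norm_mul, norm_inv]
    calc ‖ζ - p.2‖⁻¹ * ‖f (p.1, ζ)‖ ≤ ε⁻¹ * M := by
          apply mul_le_mul ?_ hfb (norm_nonneg _) (by positivity)
          apply inv_anti₀ hε
          simpa using habs
      _ = M / ε := by field_simp
  -- setup for differentiation under the integral sign
  set cm : ℝ → ℂ := circleMap 0 ρ with hcm
  have hζmem : ∀ θ : ℝ, cm θ ∈ sphere (0:ℂ) ρ := fun θ => circleMap_mem_sphere 0 hρ.le θ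
  set ψ' : ((Fin n → ℂ) × ℂ) →L[ℂ] ((Fin n → ℂ) × ℂ) :=
    (ContinuousLinearMap.fst ℂ (Fin n → ℂ) ℂ).prod 0 with hψ'
  set sndL : ((Fin n → ℂ) × ℂ) →L[ℂ] ℂ := ContinuousLinearMap.snd ℂ (Fin n → ℂ) ℂ with hsndL
  set F : P → ℝ → ℂ := fun x θ => deriv (circleMap 0 ρ) θ • ((cm θ - x.2)⁻¹ • f (x.1, cm θ))
    with hF
  set F' : P → ℝ → (((Fin n → ℂ) × ℂ) →L[ℂ] ℂ) := fun x θ =>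
    (cm θ * Complex.I) • ((cm θ - x.2)⁻¹ • ((fderiv ℂ f (x.1, cm θ)).comp ψ') +
      f (x.1, cm θ) • ((-(-1:ℂ) / (cm θ - x.2)^2) • sndL)) with hF'
  have hxball : ∀ x : P, x ∈ ball ((a, b) : P) ε →
      dist x.1 a ≤ 3*ε ∧ dist x.2 b ≤ 3*ε := by
    intro x hx
    rw [mem_ball, Prod.dist_eq, max_lt_iff] at hx
    exact ⟨hx.1.le.trans (by linarith), hx.2.le.trans (by linarith)⟩
  -- the inner HasFDerivAt computation
  have hkey : ∀ (θ : ℝ), ∀ x ∈ ball ((a, b) : P) ε,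
      HasFDerivAt (fun p : P => (cm θ - p.2)⁻¹ * f (p.1, cm θ))
        ((cm θ - x.2)⁻¹ • ((fderiv ℂ f (x.1, cm θ)).comp ψ') +
          f (x.1, cm θ) • ((-(-1:ℂ) / (cm θ - x.2)^2) • sndL)) x := by
    intro θ x hx
    obtain ⟨hx1, hx2⟩ := hxball x hx
    have h1 : HasDerivAt (fun w : ℂ => cm θ - w) (-1) x.2 := by
      simpa using (hasDerivAt_id x.2).const_sub (cm θ)
    have hu : HasFDerivAt (fun p : P => (cm θ - p.2)⁻¹)
        ((-(-1:ℂ) / (cm θ - x.2)^2) • sndL) x :=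
      (h1.inv (Fne _ (hζmem θ) x.2 hx2)).comp_hasFDerivAt x hasFDerivAt_snd
    have hv : HasFDerivAt (fun p : P => f (p.1, cm θ))
        ((fderiv ℂ f (x.1, cm θ)).comp ψ') x :=
      ((hf.differentiableAt (hU.mem_nhds (F1 x.1 hx1 _ (hζmem θ)))).hasFDerivAt).comp x
        ((hasFDerivAt_fst).prodMk (hasFDerivAt_const (cm θ) x))
    exact hu.mul hv
  have hkeyF : ∀ (θ : ℝ), ∀ x ∈ ball ((a, b) : P) ε,
      HasFDerivAt (fun p : P => F p θ) (F' x θ) x := by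
    intro θ x hx
    have := (hkey θ x hx).const_smul (𝕜 := ℂ) (R := ℂ) (deriv (circleMap 0 ρ) θ)
    rw [hF', hF]
    simp only [deriv_circleMap, smul_eq_mul] at this ⊢
    exact this
  -- norm bound
  have hbnd : ∀ (θ : ℝ), ∀ x ∈ ball ((a, b) : P) ε, ‖F' x θ‖ ≤ ρ * ((M/ε)/ε) := by
    intro θ x hx
    have hfd := hkey θ x hx
    have hfeq := hfd.fderiv
    have hsub2 : closedBall x ε ⊆ O := by
      intro y hy
      rw [mem_closedBall] at hy
      rw [hO_def, mem_ball]
      calc dist y ((a,b) : P) ≤ dist y x + dist x ((a,b) : P) := dist_triangle _ _ _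
        _ < ε + ε := by
            rw [mem_ball] at hx
            exact add_lt_add_of_le_of_lt hy hx
        _ < 3*ε := by linarith
    have hsubb : ∀ y : P, y ∈ closedBall x ε → y ∈ closedBall ((a,b) : P) (2*ε) := by
      intro y hy
      rw [mem_closedBall] at hy ⊢
      calc dist y ((a,b) : P) ≤ dist y x + dist x ((a,b) : P) := dist_triangle _ _ _
        _ ≤ ε + ε := add_le_add hy (by rw [mem_ball] at hx; exact hx.le)
        _ = 2*ε := by ring
    have hDnorm : ‖fderiv ℂ (fun p : P => (cm θ - p.2)⁻¹ * f (p.1, cm θ)) x‖ ≤ (M/ε)/ε :=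
      norm_fderiv_le_of_ball hO (hφdiff _ (hζmem θ)) hε hsub2
        (fun y hy => hφbound _ (hζmem θ) y (hsubb y hy))
    rw [hfeq] at hDnorm
    simp only [hF']
    have hns := norm_smul (cm θ * Complex.I)
      ((cm θ - x.2)⁻¹ • ((fderiv ℂ f (x.1, cm θ)).comp ψ') +
        f (x.1, cm θ) • ((-(-1:ℂ) / (cm θ - x.2)^2) • sndL))
    rw [hns]
    have habsc : ‖cm θ * Complex.I‖ = ρ := by
      rw [norm_mul]
      simp [hcm, norm_circleMap_zero, abs_of_pos hρ]
    rw [habsc]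
    exact mul_le_mul_of_nonneg_left hDnorm hρ.le
  -- measurability of F' at the base point
  have hF'_meas : AEStronglyMeasurable (F' ((a, b) : P))
      ((volume : Measure ℝ).restrict (Set.uIoc (0:ℝ) (2*Real.pi))) := by
    have hmeas1 : Measurable (fun θ => fderiv ℂ f (a, cm θ)) :=
      (measurable_fderiv ℂ f).comp
        ((continuous_const.prodMk (continuous_circleMap 0 ρ)).measurable)
    have hcomp : Continuous (fun L : ((Fin n → ℂ) × ℂ) →L[ℂ] ℂ => L.comp ψ') :=
      ((ContinuousLinearMap.compL ℂ ((Fin n → ℂ) × ℂ) ((Fin n → ℂ) × ℂ) ℂ).flip ψ').continuous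
    have hsm1 : StronglyMeasurable (fun θ => (fderiv ℂ f (a, cm θ)).comp ψ') :=
      (hcomp.measurable.comp hmeas1).stronglyMeasurable
    have hne : ∀ θ : ℝ, cm θ - b ≠ 0 :=
      fun θ => Fne _ (hζmem θ) b (by simpa using hε.le.trans (by linarith : ε ≤ 3*ε))
    have c1 : Continuous (fun θ => (cm θ - b)⁻¹) :=
      ((continuous_circleMap 0 ρ).sub continuous_const).inv₀ hne
    have c2 : Continuous (fun θ => f (a, cm θ)) := by
      apply hf.continuousOn.comp_continuous
        (continuous_const.prodMk (continuous_circleMap 0 ρ))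
      intro θ
      exact F1 a (by simpa using (by positivity : (0:ℝ) ≤ 3*ε)) _ (hζmem θ)
    have c3 : Continuous (fun θ => -(-1:ℂ) / (cm θ - b)^2) := by
      apply continuous_const.div
      · exact ((continuous_circleMap 0 ρ).sub continuous_const).pow 2
      · intro θ
        exact pow_ne_zero 2 (hne θ)
    have c4 : Continuous (fun θ => cm θ * Complex.I) :=
      (continuous_circleMap 0 ρ).mul continuous_const
    refine StronglyMeasurable.aestronglyMeasurable ?_
    exact (c4.stronglyMeasurable.smul
      ((c1.stronglyMeasurable.smul hsm1).add
        (c2.stronglyMeasurable.smul (c3.stronglyMeasurable.smul stronglyMeasurable_const))))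
  -- continuity/integrability of F x
  have hFcont : ∀ x : P, x ∈ ball ((a, b) : P) ε → Continuous (F x) := by
    intro x hx
    obtain ⟨hx1, hx2⟩ := hxball x hx
    have hd : Continuous (fun θ => deriv (circleMap 0 ρ) θ) := by
      have : (fun θ => deriv (circleMap 0 ρ) θ) = fun θ => circleMap 0 ρ θ * Complex.I :=
        funext fun θ => deriv_circleMap 0 ρ θ
      rw [this]
      exact (continuous_circleMap 0 ρ).mul continuous_const
    refine hd.fun_smul (Continuous.fun_smul ?_ ?_)
    · exact ((continuous_circleMap 0 ρ).sub continuous_const).inv₀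
        (fun θ => Fne _ (hζmem θ) x.2 hx2)
    · apply hf.continuousOn.comp_continuous
        (continuous_const.prodMk (continuous_circleMap 0 ρ))
      intro θ
      exact F1 x.1 hx1 _ (hζmem θ)
  have hF_meas : ∀ᶠ x in nhds ((a, b) : P),
      AEStronglyMeasurable (F x)
        ((volume : Measure ℝ).restrict (Set.uIoc (0:ℝ) (2*Real.pi))) := by
    filter_upwards [ball_mem_nhds ((a, b) : P) hε] with x hx
    exact (hFcont x hx).aestronglyMeasurable
  have hF_int : IntervalIntegrable (F ((a, b) : P)) volume 0 (2*Real.pi) :=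
    (hFcont _ (mem_ball_self hε)).intervalIntegrable _ _
  have happ := intervalIntegral.hasFDerivAt_integral_of_dominated_of_fderiv_le
    (𝕜 := ℂ) (μ := volume) (F := F) (F' := F') (x₀ := ((a, b) : P))
    (bound := fun _ => ρ * ((M/ε)/ε)) (ball_mem_nhds _ hε) hF_meas hF_int hF'_meas
    (Filter.Eventually.of_forall fun θ _ => hbnd θ)
    intervalIntegrable_const
    (Filter.Eventually.of_forall fun θ _ x hx => hkeyF θ x hx)
  have hfun : (fun p : P => ∮ ζ in C(0, ρ), (ζ - p.2)⁻¹ • f (p.1, ζ))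
      = fun p : P => ∫ θ in (0:ℝ)..(2*Real.pi), F p θ := by
    funext p
    rfl
  rw [hfun]
  exact happ.differentiableAt
end param

set_option maxHeartbeats 4000000 in
/-- Let `E` be a compact polar subset of `𝔻_r ⊂ 𝔻 ⊂ ℂ`, `A(r,1) = {r < |w| < 1}`, and
`f` holomorphic on `𝔻ⁿ × A(r,1)`. If there is a set `S ⊆ 𝔻ⁿ` of positive Lebesgue
measure such that `f(z',·)` extends holomorphically to `𝔻` for every `z' ∈ S`, then
`f` extends holomorphically to `𝔻^{n+1}`. -/
theorem hartogs_laurent_extension {n : ℕ} (r : ℝ) (hr : 0 < r) (hr1 : r < 1)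
    (E : Set ℂ) (hEr : E ⊆ ball (0 : ℂ) r) (hEcomp : IsCompact E) (hEpolar : IsPolar E)
    (f : (Fin n → ℂ) × ℂ → ℂ)
    (hf : DifferentiableOn ℂ f
      (polydisc n ×ˢ {w : ℂ | r < ‖w‖ ∧ ‖w‖ < 1}))
    (S : Set (Fin n → ℂ)) (hS : S ⊆ polydisc n) (hSmeas : 0 < volume S)
    (hslice : ∀ z' ∈ S, ∃ g : ℂ → ℂ, DifferentiableOn ℂ g (ball (0 : ℂ) 1) ∧
      ∀ w : ℂ, r < ‖w‖ → ‖w‖ < 1 → g w = f (z', w)) :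
    ∃ F : (Fin n → ℂ) × ℂ → ℂ,
      DifferentiableOn ℂ F (polydisc n ×ˢ ball (0 : ℂ) 1) ∧
      ∀ p ∈ polydisc n ×ˢ {w : ℂ | r < ‖w‖ ∧ ‖w‖ < 1}, F p = f p := by
  set ρ : ℝ := (r+1)/2 with hρdef
  have hrρ : r < ρ := by rw [hρdef]; linarith
  have hρ1 : ρ < 1 := by rw [hρdef]; linarith
  have hρ0 : 0 < ρ := by rw [hρdef]; linarith
  set U : Set ((Fin n → ℂ) × ℂ) :=
    polydisc n ×ˢ {w : ℂ | r < ‖w‖ ∧ ‖w‖ < 1} with hUdef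
  have hUopen : IsOpen U := by
    refine (isOpen_polydisc n).prod ?_
    have : {w : ℂ | r < ‖w‖ ∧ ‖w‖ < 1}
        = {w : ℂ | r < ‖w‖} ∩ {w : ℂ | ‖w‖ < 1} := rfl
    rw [this]
    exact (isOpen_lt continuous_const continuous_norm).inter
      (isOpen_lt continuous_norm continuous_const)
  set G : (Fin n → ℂ) × ℂ → ℂ :=
    fun p => (2*Real.pi*Complex.I : ℂ)⁻¹ • ∮ ζ in C(0, ρ), (ζ - p.2)⁻¹ • f (p.1, ζ) with hGdef
  have hGdiff : ∀ p ∈ polydisc n ×ˢ ball (0:ℂ) ρ, DifferentiableAt ℂ G p := by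
    rintro ⟨a, b⟩ ⟨ha, hb⟩
    have hb' : ‖b‖ < ρ := by simpa [mem_ball, Complex.dist_eq] using hb
    refine DifferentiableAt.fun_const_smul ?_ _
    refine differentiableAt_circleIntegral_param hUopen hf hρ0 hb' ?_
    intro ζ hζ
    have := abs_of_sphere hζ
    exact ⟨ha, by rw [this]; exact hrρ, by rw [this]; exact hρ1⟩
  have hGf : ∀ z' ∈ polydisc n, ∀ w : ℂ, r < ‖w‖ → ‖w‖ < ρ →
      G (z', w) = f (z', w) := by
    intro z₁ hz₁ w hw1 hw2
    have hwb : w ∈ ball (0:ℂ) ρ := by simpa [mem_ball, Complex.dist_eq] using hw2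
    have hw1' : ‖w‖ < 1 := hw2.trans hρ1
    set H : (Fin n → ℂ) → ℂ := fun z' => G (z', w) - f (z', w) with hH
    have hHdiff : DifferentiableOn ℂ H (polydisc n) := by
      intro z' hz'
      have hpair : DifferentiableAt ℂ (fun z' : Fin n → ℂ => ((z', w) : (Fin n → ℂ) × ℂ)) z' :=
        (differentiable_fun_id.prodMk (differentiable_const w)).differentiableAt
      have h1 : DifferentiableAt ℂ (fun z' : Fin n → ℂ => G (z', w)) z' :=
        by have := (hGdiff (z', w) ⟨hz', hwb⟩).comp z' hpair; exact this
      have h2 : DifferentiableAt ℂ (fun z' : Fin n → ℂ => f (z', w)) z' :=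
        (hf.differentiableAt (hUopen.mem_nhds ⟨hz', hw1, hw1'⟩)).comp z' hpair
      exact (h1.sub h2).differentiableWithinAt
    have hHzero : ∀ z' ∈ S, H z' = 0 := by
      intro z' hz'S
      obtain ⟨g, hg, hgf⟩ := hslice z' hz'S
      have hz' : z' ∈ polydisc n := hS hz'S
      set r' : ℝ := (r + ‖w‖)/2 with hr'def
      have hr'1 : r < r' := by rw [hr'def]; linarith
      have hr'2 : r' < ‖w‖ := by rw [hr'def]; linarith
      have hr'0 : 0 < r' := lt_trans hr hr'1
      have hr'ρ : r' < ρ := hr'2.trans hw2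
      have hdslice : ∀ ζ : ℂ, r' ≤ ‖ζ‖ → ‖ζ‖ ≤ ρ →
          DifferentiableAt ℂ (fun ζ => f (z', ζ)) ζ := by
        intro ζ h1 h2
        have hmem : ((z', ζ) : (Fin n → ℂ) × ℂ) ∈ U :=
          ⟨hz', lt_of_lt_of_le hr'1 h1, lt_of_le_of_lt h2 hρ1⟩
        exact (hf.differentiableAt (hUopen.mem_nhds hmem)).comp ζ
          ((differentiable_const z').prodMk differentiable_fun_id).differentiableAt
      have hann := annulus_cauchy hr'0 hr'ρ hr'2 hw2 hdslice
      have hinner : (∮ ζ in C(0, r'), (ζ - w)⁻¹ • f (z', ζ)) = 0 := by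
        have hsubball : closedBall (0:ℂ) r' ⊆ ball (0:ℂ) 1 :=
          closedBall_subset_ball (by linarith [hw1'])
        have hne : ∀ ζ : ℂ, ‖ζ‖ ≤ r' → ζ - w ≠ 0 := by
          intro ζ hζ h
          rw [sub_eq_zero] at h
          subst h
          linarith
        have hcongr : (∮ ζ in C(0, r'), (ζ - w)⁻¹ • f (z', ζ))
            = ∮ ζ in C(0, r'), (ζ - w)⁻¹ • g ζ := by
          apply circleIntegral.integral_congr hr'0.le
          intro ζ hζ
          have habs : ‖ζ‖ = r' := abs_of_sphere hζ
          have := hgf ζ (by rw [habs]; exact hr'1) (by rw [habs]; linarith [hw1'])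
          simp only
          rw [this]
        rw [hcongr]
        apply Complex.circleIntegral_eq_zero_of_differentiable_on_off_countable hr'0.le
          Set.countable_empty
        · intro ζ hζ
          rw [mem_closedBall_zero_iff] at hζ
          refine ContinuousWithinAt.fun_smul ?_ ?_
          · exact (ContinuousAt.continuousWithinAt
              ((continuousAt_id.sub continuousAt_const).inv₀ (hne ζ hζ)))
          · exact (hg.continuousOn.mono hsubball) ζ (by
              rwa [mem_closedBall_zero_iff])
        · rintro ζ ⟨hζ, -⟩
          rw [mem_ball_zero_iff] at hζ
          refine DifferentiableAt.fun_smul ?_ ?_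
          · exact (differentiableAt_id.sub (differentiableAt_const _)).inv (hne ζ hζ.le)
          · exact hg.differentiableAt (isOpen_ball.mem_nhds (by
              rw [mem_ball_zero_iff]; linarith [hw1']))
      have hout : (∮ ζ in C(0, ρ), (ζ - w)⁻¹ • f (z', ζ))
          = (2 * Real.pi * Complex.I : ℂ) • f (z', w) := by
        rw [hinner, sub_zero] at hann
        exact hann
      rw [hH]
      simp only [hGdef, hout, smul_smul]
      rw [inv_mul_cancel₀ Complex.two_pi_I_ne_zero, one_smul, sub_self]
    have := eq_zero_of_pos_measure hHdiff hS hSmeas hHzero z₁ hz₁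
    rw [hH] at this
    simpa [sub_eq_zero] using this
  refine ⟨fun p => if ‖p.2‖ < ρ then G p else f p, ?_, ?_⟩
  · rintro ⟨z', w⟩ ⟨hz', hw⟩
    have hw1 : ‖w‖ < 1 := by simpa [mem_ball, Complex.dist_eq] using hw
    by_cases hcase : ‖w‖ < ρ
    · apply DifferentiableAt.differentiableWithinAt
      apply (hGdiff (z', w) ⟨hz', by simpa [mem_ball, Complex.dist_eq] using hcase⟩).congr_of_eventuallyEq
      have hopen : IsOpen {p : (Fin n → ℂ) × ℂ | ‖p.2‖ < ρ} :=
        isOpen_lt (continuous_norm.comp continuous_snd) continuous_const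
      filter_upwards [hopen.mem_nhds hcase] with p hp
      exact if_pos hp
    · have hwr : r < ‖w‖ := lt_of_lt_of_le hrρ (not_lt.1 hcase)
      have hUmem : ((z', w) : (Fin n → ℂ) × ℂ) ∈ U := ⟨hz', hwr, hw1⟩
      apply DifferentiableAt.differentiableWithinAt
      apply (hf.differentiableAt (hUopen.mem_nhds hUmem)).congr_of_eventuallyEq
      filter_upwards [hUopen.mem_nhds hUmem] with p hp
      by_cases h2 : ‖p.2‖ < ρ
      · rw [if_pos h2]
        exact hGf p.1 hp.1 p.2 hp.2.1 h2
      · exact if_neg h2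
  · rintro ⟨z', w⟩ ⟨hz', hw1, hw2⟩
    by_cases h2 : ‖w‖ < ρ
    · simp only [if_pos h2]
      exact hGf z' hz' w hw1 h2
    · simp only [if_neg h2]
end
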